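/- If L is a nilpotent cyclic (right) Leibniz algebra of dimension n, and L* is a Leibniz algebra whose subalgebra lattice is isomorphic to that of L, then L* is also nilpotent cyclic of dimension n (hence L* ≅ L). -/

import Mathlib

set_option linter.unusedSectionVars false

/-- A subalgebra of a Leibniz algebra: a submodule closed under the bracket. -/
def IsSubalg {K : Type*} [Field K] {L : Type*} [AddCommGroup L] [Module K L]
    (b : L →ₗ[K] L →ₗ[K] L) (S : Submodule K L) : Prop :=
  ∀ x ∈ S, ∀ y ∈ S, b x y ∈ S

/-- The subalgebra generated by an element. -/
def gen {K : Type*} [Field K] {L : Type*} [AddCommGroup L] [Module K L]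
    (b : L →ₗ[K] L →ₗ[K] L) (x : L) : Submodule K L :=
  sInf {S : Submodule K L | IsSubalg b S ∧ x ∈ S}

/-- Lower central series: `lcs b 0 = L`, `lcs b (k+1) = [lcs b k, L]`. -/
def lcs {K : Type*} [Field K] {L : Type*} [AddCommGroup L] [Module K L]
    (b : L →ₗ[K] L →ₗ[K] L) : ℕ → Submodule K L
  | 0 => ⊤
  | n + 1 => Submodule.span K {z : L | ∃ x ∈ lcs b n, ∃ y : L, z = b x y}
open Submodule
section
variable {K : Type*} [Field K] {L : Type*} [AddCommGroup L] [Module K L]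
variable (b : L →ₗ[K] L →ₗ[K] L) (x : L)

noncomputable def pw (i : ℕ) : L := ((b.flip x) ^ i) x

lemma pw_zero : pw b x 0 = x := by simp [pw]

lemma pw_succ (i : ℕ) : pw b x (i + 1) = b (pw b x i) x := by
  simp [pw, pow_succ']

lemma pw_add (i t : ℕ) : pw b x (i + t) = ((b.flip x) ^ t) (pw b x i) := by
  simp [pw, ← Module.End.mul_apply, ← pow_add, add_comm]

/-- the "ideal part": span of x², x³, ... -/
noncomputable def Upart : Submodule K L := span K (pw b x '' {i | 1 ≤ i})

/-- span of all powers -/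
noncomputable def SPart : Submodule K L := span K (Set.range (pw b x))

variable (hb : ∀ u y z : L, b u (b y z) = b (b u y) z - b (b u z) y)
include hb

lemma kill_pw : ∀ i, 1 ≤ i → ∀ a, b a (pw b x i) = 0 := by
  intro i hi
  induction i, hi using Nat.le_induction with
  | base =>
    intro a
    rw [pw_succ, pw_zero]
    rw [hb a x x, sub_self]
  | succ i hi ih =>
    intro a
    rw [pw_succ, hb a (pw b x i) x, ih a, ih (b a x)]
    simp

lemma kill_U : ∀ u ∈ Upart b x, ∀ a, b a u = 0 := by
  intro u hu
  induction hu using Submodule.span_induction with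
  | mem u hu =>
    obtain ⟨i, hi, rfl⟩ := hu
    exact kill_pw b x hb i hi
  | zero => intro a; simp
  | add u v _ _ hu hv => intro a; rw [map_add, hu a, hv a, add_zero]
  | smul c u _ hu => intro a; rw [map_smul, hu a, smul_zero]

lemma x_mem_SPart : x ∈ SPart b x := subset_span ⟨0, pw_zero b x⟩

lemma pw_mem_SPart (i : ℕ) : pw b x i ∈ SPart b x := subset_span ⟨i, rfl⟩

lemma pw_mem_U {i : ℕ} (hi : 1 ≤ i) : pw b x i ∈ Upart b x := subset_span ⟨i, hi, rfl⟩

lemma SPart_subalg : IsSubalg b (SPart b x) := by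
  intro u hu v hv
  induction hv using Submodule.span_induction with
  | mem v hv =>
    obtain ⟨j, rfl⟩ := hv
    rcases j with _ | j
    · rw [pw_zero]
      clear v
      unfold SPart at hu
      induction hu using Submodule.span_induction with
      | mem u hu =>
        obtain ⟨i, rfl⟩ := hu
        rw [← pw_succ]
        exact pw_mem_SPart b x hb _
      | zero => simp [SPart]
      | add u w _ _ hu hw => rw [map_add]; exact add_mem hu hw
      | smul c u _ hu => rw [map_smul]; exact smul_mem _ _ hu
    · rw [kill_pw b x hb (j+1) (Nat.le_add_left 1 j) u]
      simp [SPart]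
  | zero => simp [SPart]
  | add v w _ _ hv hw => rw [map_add]; exact add_mem hv hw
  | smul c v _ hv => rw [map_smul]; exact smul_mem _ _ hv

lemma gen_le_SPart : gen b x ≤ SPart b x :=
  sInf_le ⟨SPart_subalg b x hb, x_mem_SPart b x hb⟩

lemma SPart_eq_sup : SPart b x = (K ∙ x) ⊔ Upart b x := by
  apply le_antisymm
  · rw [SPart, span_le]
    rintro _ ⟨i, rfl⟩
    rcases i with _ | i
    · rw [pw_zero]
      exact SetLike.le_def.mp le_sup_left (mem_span_singleton_self x)
    · exact SetLike.le_def.mp le_sup_right (pw_mem_U b x hb (Nat.le_add_left 1 i))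
  · apply sup_le
    · rw [span_le, Set.singleton_subset_iff]; exact x_mem_SPart b x hb
    · rw [Upart, span_le]
      rintro _ ⟨i, _, rfl⟩
      exact pw_mem_SPart b x hb i


lemma exists_coord (hsp : SPart b x = ⊤) (c : L) :
    ∃ γ : K, ∃ u ∈ Upart b x, c = γ • x + u := by
  have hc : c ∈ (K ∙ x) ⊔ Upart b x := by
    rw [← SPart_eq_sup b x hb, hsp]; trivial
  obtain ⟨y, hy, u, hu, rfl⟩ := Submodule.mem_sup.mp hc
  obtain ⟨γ, rfl⟩ := Submodule.mem_span_singleton.mp hy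
  exact ⟨γ, u, hu, rfl⟩

lemma apply_coord (hsp : SPart b x = ⊤) (a c : L) : ∃ γ : K, b a c = γ • b a x := by
  obtain ⟨γ, u, hu, rfl⟩ := exists_coord b x hb hsp c
  refine ⟨γ, ?_⟩
  rw [map_add, map_smul, kill_U b x hb u hu a, add_zero]

lemma lcs_succ_le {S : Submodule K L} (k : ℕ)
    (h : ∀ a ∈ lcs b k, ∀ y : L, b a y ∈ S) : lcs b (k+1) ≤ S := by
  simp only [lcs]
  rw [span_le]
  rintro _ ⟨a, ha, y, rfl⟩
  exact h a ha y

lemma lcs_le_range (hsp : SPart b x = ⊤) :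
    ∀ k, lcs b (k+1) ≤ LinearMap.range ((b.flip x)^(k+1)) := by
  intro k
  induction k with
  | zero =>
    refine lcs_succ_le b hb _ ?_
    intro a _ y
    obtain ⟨γ, hγ⟩ := apply_coord b x hb hsp a y
    refine LinearMap.mem_range.mpr ⟨γ • a, ?_⟩
    rw [pow_one, map_smul, hγ, LinearMap.flip_apply]
  | succ k ih =>
    refine lcs_succ_le b hb _ ?_
    intro a ha y
    obtain ⟨γ, hγ⟩ := apply_coord b x hb hsp a y
    obtain ⟨w, hw⟩ := ih ha
    refine LinearMap.mem_range.mpr ⟨γ • w, ?_⟩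
    rw [map_smul, pow_succ', Module.End.mul_apply, hw, hγ, LinearMap.flip_apply]

lemma pw_mem_lcs (k : ℕ) : pw b x k ∈ lcs b k := by
  induction k with
  | zero => trivial
  | succ k ih =>
    simp only [lcs]
    exact subset_span ⟨_, ih, x, pw_succ b x k⟩

lemma pw_stable {j : ℕ} (hj : pw b x j = 0) (t : ℕ) : pw b x (j + t) = 0 := by
  rw [pw_add, hj, map_zero]

lemma map_U_le (r : ℕ) :
    Submodule.map ((b.flip x)^r) (Upart b x) ≤ span K (pw b x '' {i | r + 1 ≤ i}) := by
  rw [Upart, Submodule.map_span, span_le]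
  rintro _ ⟨_, ⟨i, hi, rfl⟩, rfl⟩
  refine subset_span ⟨i + r, by simp at hi ⊢; omega, ?_⟩
  rw [pw_add]

lemma subalg_eq_top (hsp : SPart b x = ⊤) {j0 : ℕ} (hj0 : pw b x j0 = 0)
    {S : Submodule K L} (hS : IsSubalg b S) {y : L} (hy : y ∈ S) (hyU : y ∉ Upart b x) :
    S = ⊤ := by
  obtain ⟨γ, u, hu, hyeq⟩ := exists_coord b x hb hsp y
  have hγ : γ ≠ 0 := by
    rintro rfl
    rw [zero_smul, zero_add] at hyeq
    exact hyU (hyeq ▸ hu)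
  have hq : ∀ k, ((b.flip x) ^ k) y ∈ S := by
    intro k; induction k with
    | zero => simpa using hy
    | succ k ih =>
      have hba : ∀ a, b a y = γ • (b.flip x) a := by
        intro a
        conv_lhs => rw [hyeq]
        rw [map_add, map_smul, kill_U b x hb u hu, add_zero, LinearMap.flip_apply]
      have h1 : b (((b.flip x)^k) y) y = γ • ((b.flip x)^(k+1)) y := by
        rw [hba, ← Module.End.mul_apply, ← pow_succ']
      have h2 : ((b.flip x)^(k+1)) y = γ⁻¹ • b (((b.flip x)^k) y) y := by
        rw [h1, smul_smul, inv_mul_cancel₀ hγ, one_smul]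
      rw [h2]; exact S.smul_mem _ (hS _ ih _ hy)
  have main : ∀ t, ∀ i, 1 ≤ i → j0 - t ≤ i → pw b x i ∈ S := by
    intro t; induction t with
    | zero =>
      intro i _ hi2
      have hz : pw b x i = 0 := by
        have h := pw_stable b x hb hj0 (i - j0)
        rwa [Nat.add_sub_cancel' (by omega)] at h
      rw [hz]; exact S.zero_mem
    | succ t ih =>
      intro i hi1 hi2
      have hEiu : ((b.flip x)^i) u ∈ span K (pw b x '' {l | i + 1 ≤ l}) :=
        map_U_le b x hb i ⟨u, hu, rfl⟩
      have hspan : span K (pw b x '' {l | i + 1 ≤ l}) ≤ S := by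
        rw [span_le]; rintro _ ⟨l, hl, rfl⟩
        simp only [Set.mem_setOf_eq] at hl
        exact ih l (by omega) (by omega)
      have hEiy : ((b.flip x)^i) y = γ • pw b x i + ((b.flip x)^i) u := by
        rw [hyeq, map_add, map_smul]; rfl
      have hsub : γ • pw b x i = ((b.flip x)^i) y - ((b.flip x)^i) u := by
        rw [hEiy, add_sub_cancel_right]
      have hmem : γ • pw b x i ∈ S := by
        rw [hsub]; exact sub_mem (hq i) (hspan hEiu)
      have h3 := S.smul_mem γ⁻¹ hmem
      rwa [smul_smul, inv_mul_cancel₀ hγ, one_smul] at h3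
  have hUS : Upart b x ≤ S := by
    rw [Upart, span_le]; rintro _ ⟨i, hi, rfl⟩
    simp only [Set.mem_setOf_eq] at hi
    exact main j0 i hi (by omega)
  rw [eq_top_iff, ← hsp, SPart, span_le]
  rintro _ ⟨i, rfl⟩
  rcases i with _ | i
  · rw [pw_zero]
    have hxy : x = γ⁻¹ • (y - u) := by
      rw [hyeq, add_sub_cancel_right, smul_smul, inv_mul_cancel₀ hγ, one_smul]
    rw [hxy]
    exact S.smul_mem _ (sub_mem hy (hUS hu))
  · exact main j0 (i+1) (by omega) (by omega)


lemma pw_linearIndependent {m : ℕ} (hm : pw b x m ≠ 0) (hm1 : pw b x (m+1) = 0) :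
    LinearIndependent K (fun i : Fin (m+1) => pw b x i) := by
  rw [Fintype.linearIndependent_iff]
  intro g hg
  have key : ∀ i : Fin (m+1), (∀ j : Fin (m+1), (j:ℕ) < (i:ℕ) → g j = 0) → g i = 0 := by
    intro i hsmall
    have h0 : ((b.flip x)^(m - (i:ℕ))) (∑ j, g j • pw b x j) = 0 := by rw [hg, map_zero]
    rw [map_sum] at h0
    have heval : ∀ j : Fin (m+1),
        ((b.flip x)^(m - (i:ℕ))) (g j • pw b x j) = g j • pw b x ((j:ℕ) + (m - (i:ℕ))) := by
      intro j; rw [map_smul, ← pw_add]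
    rw [Finset.sum_congr rfl (fun j _ => heval j)] at h0
    have h1 : ∑ j : Fin (m+1), g j • pw b x ((j:ℕ) + (m - (i:ℕ))) = g i • pw b x m := by
      rw [Finset.sum_eq_single i]
      · rw [Nat.add_sub_cancel' (Fin.is_le i)]
      · intro j _ hji
        rcases Nat.lt_or_ge (j:ℕ) (i:ℕ) with h | h
        · rw [hsmall j h, zero_smul]
        · have hne : (j:ℕ) ≠ (i:ℕ) := fun hc => hji (Fin.ext hc)
          have hi := i.isLt
          have hjlt := j.isLt
          have hge : m + 1 ≤ (j:ℕ) + (m - (i:ℕ)) := by omega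
          have hz : pw b x ((j:ℕ) + (m - (i:ℕ))) = 0 := by
            have h2 := pw_stable b x hb hm1 ((j:ℕ) + (m - (i:ℕ)) - (m+1))
            rwa [Nat.add_sub_cancel' hge] at h2
          rw [hz, smul_zero]
      · intro hmem; exact absurd (Finset.mem_univ i) hmem
    rw [h1] at h0
    rcases smul_eq_zero.mp h0 with h | h
    · exact h
    · exact absurd h hm
  have H : ∀ N : ℕ, ∀ i : Fin (m+1), (i:ℕ) ≤ N → g i = 0 := by
    intro N; induction N with
    | zero => intro i hi; exact key i (fun j hj => absurd hj (by omega))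
    | succ N ihN => intro i hi; exact key i (fun j hj => ihN j (by omega))
  exact fun i => H m i (by have := i.isLt; omega)

lemma pw_span_eq_top (hsp : SPart b x = ⊤) {m : ℕ} (hm1 : pw b x (m+1) = 0) :
    span K (Set.range (fun i : Fin (m+1) => pw b x i)) = ⊤ := by
  rw [eq_top_iff, ← hsp, SPart, span_le]
  rintro _ ⟨i, rfl⟩
  by_cases him : i ≤ m
  · exact subset_span ⟨⟨i, by omega⟩, rfl⟩
  · have hz : pw b x i = 0 := by
      have h2 := pw_stable b x hb hm1 (i - (m+1))
      rwa [Nat.add_sub_cancel' (by omega)] at h2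
    rw [hz]; exact zero_mem _

noncomputable def pwBasis (hsp : SPart b x = ⊤) {m : ℕ} (hm : pw b x m ≠ 0)
    (hm1 : pw b x (m+1) = 0) : Module.Basis (Fin (m+1)) K L :=
  Module.Basis.mk (pw_linearIndependent b x hb hm hm1)
    (le_of_eq (pw_span_eq_top b x hb hsp hm1).symm)

lemma pwBasis_apply (hsp : SPart b x = ⊤) {m : ℕ} (hm : pw b x m ≠ 0)
    (hm1 : pw b x (m+1) = 0) (i : Fin (m+1)) :
    pwBasis b x hb hsp hm hm1 i = pw b x i := by
  simp [pwBasis]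

lemma finrank_eq_of_pw (hsp : SPart b x = ⊤) {m : ℕ} (hm : pw b x m ≠ 0)
    (hm1 : pw b x (m+1) = 0) : Module.finrank K L = m + 1 := by
  rw [Module.finrank_eq_card_basis (pwBasis b x hb hsp hm hm1), Fintype.card_fin]

lemma Upart_eq_span_fin {m : ℕ} (hm1 : pw b x (m+1) = 0) :
    Upart b x = span K (Set.range (fun i : Fin m => pw b x ((i:ℕ) + 1))) := by
  apply le_antisymm
  · rw [Upart, span_le]
    rintro _ ⟨i, hi, rfl⟩
    simp only [Set.mem_setOf_eq] at hi
    by_cases him : i ≤ m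
    · exact subset_span ⟨⟨i - 1, by omega⟩, by show pw b x (i - 1 + 1) = pw b x i; congr 1; omega⟩
    · have hz : pw b x i = 0 := by
        have h2 := pw_stable b x hb hm1 (i - (m+1))
        rwa [Nat.add_sub_cancel' (by omega)] at h2
      rw [hz]; exact zero_mem _
  · rw [span_le]
    rintro _ ⟨i, rfl⟩
    exact pw_mem_U b x hb (Nat.le_add_left 1 _)

lemma finrank_Upart {m : ℕ} (hm : pw b x m ≠ 0) (hm1 : pw b x (m+1) = 0) :
    Module.finrank K (Upart b x) = m := by
  have hind : LinearIndependent K (fun i : Fin m => pw b x ((i:ℕ) + 1)) := by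
    have h2 := (pw_linearIndependent b x hb hm hm1).comp Fin.succ (Fin.succ_injective m)
    simpa [Function.comp_def, Fin.val_succ] using h2
  rw [Upart_eq_span_fin b x hb hm1, finrank_span_eq_card hind, Fintype.card_fin]

lemma flip_mem_U (hsp : SPart b x = ⊤) (w : L) : b w x ∈ Upart b x := by
  have hw : w ∈ SPart b x := by rw [hsp]; trivial
  unfold SPart at hw
  induction hw using Submodule.span_induction with
  | mem w hw =>
    obtain ⟨i, rfl⟩ := hw
    rw [← pw_succ]
    exact pw_mem_U b x hb (Nat.le_add_left 1 i)
  | zero => rw [map_zero]; simp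
  | add u v _ _ hu hv =>
    rw [map_add, LinearMap.add_apply]
    exact add_mem hu hv
  | smul c u _ hu =>
    rw [map_smul, LinearMap.smul_apply]
    exact Submodule.smul_mem _ _ hu

lemma x_not_mem_U (hx0 : x ≠ 0) : x ∉ Upart b x := by
  intro hx
  have h1 : b x x = 0 := kill_U b x hb x hx x
  have h2 : pw b x 1 = 0 := by rw [pw_succ, pw_zero]; exact h1
  have h3 : ∀ i, 1 ≤ i → pw b x i = 0 := by
    intro i hi
    have h4 := pw_stable b x hb h2 (i - 1)
    rwa [Nat.add_sub_cancel' hi] at h4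
  have h4 : Upart b x ≤ ⊥ := by
    rw [Upart, Submodule.span_le]
    rintro _ ⟨i, hi, rfl⟩
    simp only [Set.mem_setOf_eq] at hi
    simp [h3 i hi]
  exact hx0 (by simpa using h4 hx)

end
section Helpers
variable {K : Type*} [Field K] {L : Type*} [AddCommGroup L] [Module K L]

lemma isSubalg_bot (b : L →ₗ[K] L →ₗ[K] L) : IsSubalg b ⊥ := by
  intro u hu v hv
  simp only [Submodule.mem_bot] at *
  rw [hu, hv]; simp

lemma isSubalg_top (b : L →ₗ[K] L →ₗ[K] L) : IsSubalg b ⊤ := fun _ _ _ _ => trivial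

lemma isSubalg_gen (b : L →ₗ[K] L →ₗ[K] L) (x : L) : IsSubalg b (gen b x) := by
  intro u hu v hv
  rw [gen, Submodule.mem_sInf] at *
  intro S hS
  exact hS.1 u (hu S hS) v (hv S hS)

lemma mem_gen (b : L →ₗ[K] L →ₗ[K] L) (x : L) : x ∈ gen b x :=
  Submodule.mem_sInf.mpr fun _ hS => hS.2

lemma chain_le_finrank {W : Type*} [AddCommGroup W] [Module K W] [FiniteDimensional K W]
    {d : ℕ} (g : Fin (d+1) → Submodule K W) (hg : StrictMono g) :
    d ≤ Module.finrank K W := by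
  have key : ∀ k : ℕ, ∀ hk : k < d + 1, k ≤ Module.finrank K (g ⟨k, hk⟩) := by
    intro k
    induction k with
    | zero => intro hk; exact Nat.zero_le _
    | succ k ih =>
      intro hk
      have h1 := ih (by omega)
      have h2 : g ⟨k, by omega⟩ < g ⟨k+1, hk⟩ := hg (by simp [Fin.lt_def])
      have h3 := Submodule.finrank_lt_finrank_of_lt h2
      omega
  have h4 := key d (by omega)
  exact h4.trans (Submodule.finrank_le _)

lemma finrank_le_of_orderIso {V W : Type*} [AddCommGroup V] [Module K V]
    [AddCommGroup W] [Module K W] [FiniteDimensional K V] [FiniteDimensional K W]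
    (φ : Submodule K V ≃o Submodule K W) :
    Module.finrank K V ≤ Module.finrank K W := by
  set d := Module.finrank K V with hd
  let B : Module.Basis (Fin d) K V := Module.finBasis K V
  exact chain_le_finrank (fun i => φ (B.flag i)) (φ.strictMono.comp B.flag_strictMono)

lemma finrank_eq_of_orderIso {V W : Type*} [AddCommGroup V] [Module K V]
    [AddCommGroup W] [Module K W] [FiniteDimensional K V] [FiniteDimensional K W]
    (φ : Submodule K V ≃o Submodule K W) :
    Module.finrank K V = Module.finrank K W :=
  le_antisymm (finrank_le_of_orderIso φ) (finrank_le_of_orderIso φ.symm)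

end Helpers
/-- If `L` is a nilpotent cyclic right Leibniz algebra of dimension `n`, and `L'`
is a right Leibniz algebra whose subalgebra lattice is isomorphic to that of `L`,
then `L'` is also nilpotent cyclic of dimension `n`; hence `L' ≅ L`. -/
theorem lattice_iso_nilpotent_cyclic {K : Type*} [Field K]
    {L : Type*} [AddCommGroup L] [Module K L] [FiniteDimensional K L]
    {L' : Type*} [AddCommGroup L'] [Module K L'] [FiniteDimensional K L']
    (b : L →ₗ[K] L →ₗ[K] L) (b' : L' →ₗ[K] L' →ₗ[K] L')
    (hb : ∀ x y z : L, b x (b y z) = b (b x y) z - b (b x z) y)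
    (hb' : ∀ x y z : L', b' x (b' y z) = b' (b' x y) z - b' (b' x z) y)
    (hnilp : ∃ k : ℕ, lcs b k = ⊥)
    (n : ℕ) (hdim : Module.finrank K L = n)
    (x : L) (hgen : gen b x = ⊤)
    (θ : {S : Submodule K L // IsSubalg b S} ≃o {S : Submodule K L' // IsSubalg b' S}) :
    (∃ k : ℕ, lcs b' k = ⊥) ∧ (∃ x' : L', gen b' x' = ⊤) ∧
      Module.finrank K L' = n ∧
      ∃ e : L ≃ₗ[K] L', ∀ u v : L, e (b u v) = b' (e u) (e v) := by
  classical
  rcases Nat.eq_zero_or_pos n with hn0 | hn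
  · -- degenerate case n = 0
    subst hn0
    have hLsub : Subsingleton L := Module.finrank_zero_iff.mp hdim
    have hallL : ∀ S : Submodule K L, S = ⊥ := by
      intro S; ext w; simp [Subsingleton.elim w 0]
    have h2 : (⊥ : Submodule K L') = ⊤ := by
      have ha := θ.symm ⟨⊥, isSubalg_bot b'⟩
      have hb2 := θ.symm ⟨⊤, isSubalg_top b'⟩
      have h3 : θ.symm ⟨⊥, isSubalg_bot b'⟩ = θ.symm ⟨⊤, isSubalg_top b'⟩ :=
        Subtype.ext ((hallL _).trans (hallL _).symm)
      have h4 := θ.symm.injective h3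
      exact congrArg Subtype.val h4
    have hsub' : Subsingleton L' := by
      constructor
      intro a c
      have ha : a ∈ (⊥ : Submodule K L') := h2 ▸ Submodule.mem_top
      have hc : c ∈ (⊥ : Submodule K L') := h2 ▸ Submodule.mem_top
      simp only [Submodule.mem_bot] at ha hc
      rw [ha, hc]
    have hfr' : Module.finrank K L' = 0 := Module.finrank_zero_iff.mpr hsub'
    refine ⟨⟨0, ?_⟩, ⟨0, le_antisymm le_top (h2 ▸ bot_le)⟩, hfr', ?_⟩
    · simp only [lcs]; exact h2.symm
    · have he : Module.finrank K L = Module.finrank K L' := by rw [hdim, hfr']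
      refine ⟨LinearEquiv.ofFinrankEq _ _ he, fun u v => Subsingleton.elim _ _⟩
  · -- main case : n ≥ 1
    -- ===== Structure of L =====
    have hx0 : x ≠ 0 := by
      rintro rfl
      have h1 : gen b (0:L) ≤ ⊥ := sInf_le ⟨isSubalg_bot b, Submodule.zero_mem ⊥⟩
      rw [hgen] at h1
      have hsub : Subsingleton L := by
        constructor
        intro a c
        have ha : a ∈ (⊥ : Submodule K L) := h1 Submodule.mem_top
        have hc : c ∈ (⊥ : Submodule K L) := h1 Submodule.mem_top
        simp only [Submodule.mem_bot] at ha hc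
        rw [ha, hc]
      have h2 : Module.finrank K L = 0 := Module.finrank_zero_iff.mpr hsub
      omega
    have hsp : SPart b x = ⊤ := eq_top_iff.mpr (hgen ▸ gen_le_SPart b x hb)
    obtain ⟨k₀, hk₀⟩ := hnilp
    have hex : ∃ j, pw b x j = 0 := by
      refine ⟨k₀, ?_⟩
      have h1 := pw_mem_lcs b x hb k₀
      rw [hk₀] at h1
      simpa using h1
    have hj0 : pw b x (Nat.find hex) = 0 := Nat.find_spec hex
    have hj0pos : 1 ≤ Nat.find hex := by
      rcases Nat.eq_zero_or_pos (Nat.find hex) with h | h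
      · exfalso; apply hx0; rw [← pw_zero b x, ← h]; exact hj0
      · exact h
    set m : ℕ := Nat.find hex - 1 with hmdef
    have hm : pw b x m ≠ 0 := Nat.find_min hex (by omega)
    have hm1 : pw b x (m+1) = 0 := by
      rw [show m + 1 = Nat.find hex by omega]; exact hj0
    have hmn : m + 1 = n := by rw [← hdim, finrank_eq_of_pw b x hb hsp hm hm1]
    set L2 := Upart b x with hL2def
    have hxL2 : x ∉ L2 := x_not_mem_U b x hb hx0
    have fact1 : ∀ S : Submodule K L, S ≤ L2 → IsSubalg b S := by
      intro S hS u hu v hv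
      rw [kill_U b x hb v (hS hv) u]; exact S.zero_mem
    have fact2 : ∀ S : Submodule K L, IsSubalg b S → ¬ S ≤ L2 → S = ⊤ := by
      intro S hS hSle
      obtain ⟨y, hyS, hyU⟩ := SetLike.not_le_iff_exists.mp hSle
      exact subalg_eq_top b x hb hsp hj0 hS hyS hyU
    -- ===== Transfer through θ =====
    set TL2 : {S : Submodule K L // IsSubalg b S} := ⟨L2, fact1 L2 le_rfl⟩ with hTL2
    set M' : Submodule K L' := (θ TL2).1 with hM'def
    have htop' : θ ⟨⊤, isSubalg_top b⟩ = ⟨⊤, isSubalg_top b'⟩ := by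
      have h1 : ∀ A : {S : Submodule K L' // IsSubalg b' S}, A ≤ θ ⟨⊤, isSubalg_top b⟩ := by
        intro A
        rw [← θ.apply_symm_apply A]
        exact θ.monotone (Subtype.coe_le_coe.mp le_top)
      exact le_antisymm (Subtype.coe_le_coe.mp le_top) (h1 _)
    have hM'ne : M' ≠ ⊤ := by
      intro h
      have h1 : θ TL2 = ⟨⊤, isSubalg_top b'⟩ := Subtype.ext h
      rw [← htop'] at h1
      have h2 := θ.injective h1
      have h3 : L2 = ⊤ := congrArg Subtype.val h2
      exact hxL2 (h3 ▸ Submodule.mem_top)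
    have hmax : ∀ S' : Submodule K L', IsSubalg b' S' → S' ≠ ⊤ → S' ≤ M' := by
      intro S' hS' hne
      by_cases hle : (θ.symm ⟨S', hS'⟩).1 ≤ L2
      · have h1 : θ.symm ⟨S', hS'⟩ ≤ TL2 := Subtype.coe_le_coe.mp hle
        have h2 := θ.monotone h1
        rw [θ.apply_symm_apply] at h2
        exact Subtype.coe_le_coe.mpr h2
      · exfalso
        have h1 : (θ.symm ⟨S', hS'⟩).1 = ⊤ := fact2 _ (θ.symm ⟨S', hS'⟩).2 hle
        have h2 : θ.symm ⟨S', hS'⟩ = ⟨⊤, isSubalg_top b⟩ := Subtype.ext h1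
        have h3 : (⟨S', hS'⟩ : {S // IsSubalg b' S}) = θ ⟨⊤, isSubalg_top b⟩ := by
          rw [← h2, θ.apply_symm_apply]
        rw [htop'] at h3
        exact hne (congrArg Subtype.val h3)
    -- ===== a generator of L' =====
    obtain ⟨z, hzM'⟩ : ∃ z : L', z ∉ M' := by
      by_contra h; push_neg at h
      exact hM'ne (eq_top_iff.mpr fun w _ => h w)
    have hz_gen : gen b' z = ⊤ := by
      by_contra h
      exact hzM' (hmax _ (isSubalg_gen b' z) h (mem_gen b' z))
    have hsp' : SPart b' z = ⊤ := eq_top_iff.mpr (hz_gen ▸ gen_le_SPart b' z hb')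
    set U' := Upart b' z with hU'def
    have hz0 : z ≠ 0 := fun h => hzM' (h ▸ M'.zero_mem)
    have hzU' : z ∉ U' := x_not_mem_U b' z hb' hz0
    have fact1' : ∀ S' : Submodule K L', S' ≤ U' → IsSubalg b' S' := by
      intro S' hS' u hu v hv
      rw [kill_U b' z hb' v (hS' hv) u]; exact S'.zero_mem
    have hU'le : U' ≤ M' :=
      hmax _ (fact1' U' le_rfl) (fun h => hzU' (h ▸ Submodule.mem_top))
    have hU'M' : U' = M' := by
      refine le_antisymm hU'le ?_
      intro w hw
      by_contra hwU
      obtain ⟨γ, u, hu, hweq⟩ := exists_coord b' z hb' hsp' w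
      have hγ : γ ≠ 0 := by
        rintro rfl; rw [zero_smul, zero_add] at hweq; exact hwU (hweq ▸ hu)
      have hzmem : z ∈ M' := by
        have h1 : z = γ⁻¹ • (w - u) := by
          rw [hweq, add_sub_cancel_right, smul_smul, inv_mul_cancel₀ hγ, one_smul]
        rw [h1]
        exact M'.smul_mem _ (sub_mem hw (hU'le hu))
      exact hzM' hzmem
    -- ===== Fitting decomposition: nilpotency of L' =====
    obtain ⟨N₀, hN₀⟩ := Filter.eventually_atTop.mp
      (LinearMap.eventually_isCompl_ker_pow_range_pow (b'.flip z))
    set N := max N₀ 1 with hNdef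
    have hN1 : 1 ≤ N := le_max_right _ _
    have hcompl : IsCompl (LinearMap.ker ((b'.flip z)^N)) (LinearMap.range ((b'.flip z)^N)) :=
      hN₀ N (le_max_left _ _)
    have hrange_le : LinearMap.range ((b'.flip z)^N) ≤ U' := by
      rintro _ ⟨w, rfl⟩
      rw [show N = (N-1)+1 by omega, pow_succ', Module.End.mul_apply, LinearMap.flip_apply]
      exact flip_mem_U b' z hb' hsp' _
    have hsplit : z ∈ (LinearMap.ker ((b'.flip z)^N)) ⊔ (LinearMap.range ((b'.flip z)^N)) := by
      rw [hcompl.codisjoint.eq_top]; trivial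
    obtain ⟨w, hw, r, hr, hzwr⟩ := Submodule.mem_sup.mp hsplit
    have hker_inv : ∀ v ∈ LinearMap.ker ((b'.flip z)^N), (b'.flip z) v ∈ LinearMap.ker ((b'.flip z)^N) := by
      intro v hv
      rw [LinearMap.mem_ker] at hv ⊢
      rw [← Module.End.mul_apply, ← pow_succ, pow_succ', Module.End.mul_apply, hv, map_zero]
    have hwU'2 : w ∉ U' := by
      intro hmem
      apply hzU'
      rw [← hzwr]
      exact Submodule.add_mem _ hmem (hrange_le hr)
    set S : Submodule K L' := (K ∙ w) ⊔ ((LinearMap.ker ((b'.flip z)^N)) ⊓ U') with hSdef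
    have hwS : w ∈ S := le_sup_left (α := Submodule K L') (Submodule.mem_span_singleton_self w)
    have hSsub : IsSubalg b' S := by
      intro a ha v hv
      obtain ⟨v1, hv1, u2, hu2, rfl⟩ := Submodule.mem_sup.mp hv
      obtain ⟨c, rfl⟩ := Submodule.mem_span_singleton.mp hv1
      have h1 : b' a (c • w + u2) = c • b' a w := by
        rw [map_add, map_smul, kill_U b' z hb' u2 hu2.2 a, add_zero]
      have h2 : b' a w = (b'.flip z) a := by
        have h3 : w = z - r := by rw [← hzwr, add_sub_cancel_right]
        rw [h3, map_sub, kill_U b' z hb' r (hrange_le hr) a, sub_zero, LinearMap.flip_apply]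
      rw [h1, h2]
      apply S.smul_mem
      have hEa_ker : (b'.flip z) a ∈ LinearMap.ker ((b'.flip z)^N) := by
        obtain ⟨a1, ha1, a2, ha2, rfl⟩ := Submodule.mem_sup.mp ha
        obtain ⟨d, rfl⟩ := Submodule.mem_span_singleton.mp ha1
        rw [map_add, map_smul]
        refine Submodule.add_mem _ (Submodule.smul_mem _ _ ?_) (hker_inv _ ha2.1)
        exact hker_inv w hw
      have : (b'.flip z) a ∈ (LinearMap.ker ((b'.flip z)^N)) ⊓ U' :=
        ⟨hEa_ker, flip_mem_U b' z hb' hsp' a⟩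
      exact le_sup_right (α := Submodule K L') this
    have hStop : S = ⊤ := by
      by_contra h
      have h2 : w ∈ M' := hmax S hSsub h hwS
      rw [← hU'M'] at h2
      exact hwU'2 h2
    have hRN : LinearMap.range ((b'.flip z)^N) ≤ LinearMap.ker ((b'.flip z)^N) := by
      intro r' hr'
      have hr'S : r' ∈ S := hStop ▸ Submodule.mem_top
      obtain ⟨v1, hv1, u2, hu2, hr'eq⟩ := Submodule.mem_sup.mp hr'S
      obtain ⟨c, rfl⟩ := Submodule.mem_span_singleton.mp hv1
      have hcwU' : c • w ∈ U' := by
        have h1 : c • w = r' - u2 := by rw [← hr'eq, add_sub_cancel_right]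
        rw [h1]
        exact sub_mem (hrange_le hr') hu2.2
      have hc0 : c = 0 := by
        by_contra hc
        apply hwU'2
        have := U'.smul_mem c⁻¹ hcwU'
        rwa [smul_smul, inv_mul_cancel₀ hc, one_smul] at this
      rw [← hr'eq, hc0, zero_smul, zero_add]
      exact hu2.1
    have hRbot : LinearMap.range ((b'.flip z)^N) = ⊥ := by
      rw [← le_bot_iff]
      intro r' hr'
      exact hcompl.disjoint.le_bot ⟨hRN hr', hr'⟩
    have hnilp' : ∃ k, lcs b' k = ⊥ := by
      refine ⟨N, ?_⟩
      have h1 := lcs_le_range b' z hb' hsp' (N-1)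
      rw [show N - 1 + 1 = N by omega, hRbot] at h1
      exact le_bot_iff.mp h1
    -- ===== dimension of L' =====
    have hex' : ∃ j, pw b' z j = 0 := by
      refine ⟨N, ?_⟩
      have h1 : ((b'.flip z)^N) z ∈ LinearMap.range ((b'.flip z)^N) :=
        LinearMap.mem_range_self _ z
      rw [hRbot] at h1
      simpa [pw] using h1
    have hj0' : pw b' z (Nat.find hex') = 0 := Nat.find_spec hex'
    have hj0pos' : 1 ≤ Nat.find hex' := by
      rcases Nat.eq_zero_or_pos (Nat.find hex') with h | h
      · exfalso; apply hz0; rw [← pw_zero b' z, ← h]; exact hj0'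
      · exact h
    set m2 : ℕ := Nat.find hex' - 1 with hm2def
    have hm2 : pw b' z m2 ≠ 0 := Nat.find_min hex' (by omega)
    have hm21 : pw b' z (m2+1) = 0 := by
      rw [show m2 + 1 = Nat.find hex' by omega]; exact hj0'
    -- order isomorphism between submodule lattices of L2 and U'
    let C : {S : Submodule K L // S ≤ L2} ≃o {S' : Submodule K L' // S' ≤ U'} :=
      { toFun := fun S => ⟨(θ ⟨S.1, fact1 S.1 S.2⟩).1, by
          have h1 : (⟨S.1, fact1 S.1 S.2⟩ : {T // IsSubalg b T}) ≤ TL2 :=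
            Subtype.coe_le_coe.mp S.2
          have h2 := θ.monotone h1
          have h3 := Subtype.coe_le_coe.mpr h2
          rw [hU'M']
          exact h3⟩
        invFun := fun S' => ⟨(θ.symm ⟨S'.1, fact1' S'.1 S'.2⟩).1, by
          have h1 : (⟨S'.1, fact1' S'.1 S'.2⟩ : {T // IsSubalg b' T}) ≤ θ TL2 :=
            Subtype.coe_le_coe.mp (le_trans S'.2 (le_of_eq hU'M'))
          have h2 := θ.symm.monotone h1
          rw [θ.symm_apply_apply] at h2
          exact Subtype.coe_le_coe.mpr h2⟩
        left_inv := fun S => by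
          apply Subtype.ext
          show (θ.symm _).1 = S.1
          have h1 : (⟨(θ ⟨S.1, fact1 S.1 S.2⟩).1, _⟩ : {T // IsSubalg b' T})
              = θ ⟨S.1, fact1 S.1 S.2⟩ := Subtype.ext rfl
          rw [h1, θ.symm_apply_apply]
        right_inv := fun S' => by
          apply Subtype.ext
          show (θ _).1 = S'.1
          have h1 : (⟨(θ.symm ⟨S'.1, fact1' S'.1 S'.2⟩).1, _⟩ : {T // IsSubalg b T})
              = θ.symm ⟨S'.1, fact1' S'.1 S'.2⟩ := Subtype.ext rfl
          rw [h1, θ.apply_symm_apply]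
        map_rel_iff' := by
          intro S T
          constructor
          · intro h
            have h2 : θ ⟨S.1, fact1 S.1 S.2⟩ ≤ θ ⟨T.1, fact1 T.1 T.2⟩ :=
              Subtype.coe_le_coe.mp h
            have h3 := θ.le_iff_le.mp h2
            exact Subtype.coe_le_coe.mp (Subtype.coe_le_coe.mpr h3)
          · intro h
            have h2 : (⟨S.1, fact1 S.1 S.2⟩ : {T0 // IsSubalg b T0})
                ≤ ⟨T.1, fact1 T.1 T.2⟩ := Subtype.coe_le_coe.mp h
            have h3 := θ.monotone h2
            exact Subtype.coe_le_coe.mpr h3 }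
    have hfr : Module.finrank K L2 = Module.finrank K U' := by
      have A := Submodule.MapSubtype.orderIso L2
      have B := Submodule.MapSubtype.orderIso U'
      exact finrank_eq_of_orderIso ((A.trans C).trans B.symm)
    have hm2m : m2 = m := by
      have e1 : Module.finrank K L2 = m := finrank_Upart b x hb hm hm1
      have e2 : Module.finrank K U' = m2 := finrank_Upart b' z hb' hm2 hm21
      omega
    have hdim' : Module.finrank K L' = n := by
      rw [finrank_eq_of_pw b' z hb' hsp' hm2 hm21]; omega
    -- ===== the isomorphism =====
    let BL : Module.Basis (Fin (m+1)) K L := pwBasis b x hb hsp hm hm1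
    let BL' : Module.Basis (Fin (m2+1)) K L' := pwBasis b' z hb' hsp' hm2 hm21
    let e : L ≃ₗ[K] L' := BL.equiv BL' (finCongr (by omega))
    have heBL : ∀ i : Fin (m+1), e (BL i) = BL' (finCongr (by omega : m + 1 = m2 + 1) i) :=
      fun i => BL.equiv_apply i BL' (finCongr (by omega))
    have hepw : ∀ i : ℕ, i ≤ m → e (pw b x i) = pw b' z i := by
      intro i hi
      have h1 : pw b x i = BL ⟨i, by omega⟩ := (pwBasis_apply b x hb hsp hm hm1 ⟨i, by omega⟩).symm
      rw [h1, heBL]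
      rw [pwBasis_apply b' z hb' hsp' hm2 hm21]
      rfl
    have hepw' : ∀ i : ℕ, e (pw b x i) = pw b' z i := by
      intro i
      by_cases hi : i ≤ m
      · exact hepw i hi
      · have h1 : pw b x i = 0 := by
          have h2 := pw_stable b x hb hm1 (i - (m+1))
          rwa [Nat.add_sub_cancel' (by omega)] at h2
        have h2 : pw b' z i = 0 := by
          have h3 := pw_stable b' z hb' hm21 (i - (m2+1))
          rwa [Nat.add_sub_cancel' (by omega)] at h3
        rw [h1, h2, map_zero]
    have hbil : b.compr₂ (e : L →ₗ[K] L') = b'.compl₁₂ (e : L →ₗ[K] L') (e : L →ₗ[K] L') := by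
      apply LinearMap.ext_basis BL BL
      intro i j
      rw [LinearMap.compr₂_apply, LinearMap.compl₁₂_apply]
      simp only [LinearEquiv.coe_coe]
      rw [pwBasis_apply b x hb hsp hm hm1 i, pwBasis_apply b x hb hsp hm hm1 j]
      rw [hepw' i, hepw' j]
      rcases Nat.eq_zero_or_pos (j : ℕ) with hj | hj
      · rw [hj, pw_zero, pw_zero, ← pw_succ, ← pw_succ, hepw' ((i:ℕ)+1)]
      · rw [kill_pw b x hb _ hj, kill_pw b' z hb' _ hj, map_zero]
    refine ⟨hnilp', ⟨z, hz_gen⟩, hdim', e, fun u v => ?_⟩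
    have h1 := LinearMap.congr_fun (LinearMap.congr_fun hbil u) v
    simpa [LinearMap.compr₂_apply, LinearMap.compl₁₂_apply] using h1
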